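/- arXiv:1910.05324 — 11 statements merged into one kernel-verified Lean document; each statement's English description precedes it below -/
import Mathlib

section
/- Let (X, 𝒰) be a uniform space and f : X → X uniformly continuous. Then f has the topological shadowing property if and only if f^n has the topological shadowing property for all n ∈ ℕ. -/
open Set Filter Function

variable {X : Type*}

/-- An `E`-chain of length `n` from `x` to `y` for the map `f`. -/
def ChainFrom (f : X → X) (E : Set (X × X)) (n : ℕ) (x y : X) : Prop :=
  ∃ c : ℕ → X, c 0 = x ∧ c n = y ∧ ∀ i < n, (f (c i), c (i + 1)) ∈ E

/-- Topological chain transitivity on a uniform space. -/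
def ChainTransitive [UniformSpace X] (f : X → X) : Prop :=
  ∀ E ∈ uniformity X, ∀ x y : X, ∃ n ≥ 1, ChainFrom f E n x y

/-- Lengths of `E`-chains from `x` to itself (loops). -/
def LoopLengths (f : X → X) (E : Set (X × X)) (x : X) : Set ℕ :=
  {n | 1 ≤ n ∧ ChainFrom f E n x x}

/-- `g` is the greatest common divisor of the set `S` of naturals. -/
def IsGcdOfSet (g : ℕ) (S : Set ℕ) : Prop :=
  (∀ n ∈ S, g ∣ n) ∧ ∀ d : ℕ, (∀ n ∈ S, d ∣ n) → d ∣ g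

/-- The relation `x ∼_E y`: some `E`-chain from `x` to `y` has length a multiple of `ι`. -/
def SimE (f : X → X) (E : Set (X × X)) (ι : ℕ) (x y : X) : Prop :=
  ∃ n, ι ∣ n ∧ ChainFrom f E n x y

/-- Topological shadowing property on a uniform space. -/
def Shadowing [UniformSpace X] (f : X → X) : Prop :=
  ∀ E ∈ uniformity X, ∃ D ∈ uniformity X,
    ∀ x : ℕ → X, (∀ i, (f (x i), x (i + 1)) ∈ D) →
      ∃ y, ∀ n, (f^[n] y, x n) ∈ E

/-- Topological chain mixing on a uniform space. -/
def ChainMixing [UniformSpace X] (f : X → X) : Prop :=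
  ∀ D ∈ uniformity X, ∀ x y : X, ∃ N ≥ 1, ∀ n ≥ N, ChainFrom f D n x y

/-- A non-wandering point of `f`. -/
def NonWandering [TopologicalSpace X] (f : X → X) (x : X) : Prop :=
  ∀ V ∈ nhds x, ∃ n ≥ 1, (V ∩ f^[n] ⁻¹' V).Nonempty

/-- Topological transitivity. -/
def TopTransitive [TopologicalSpace X] (f : X → X) : Prop :=
  ∀ U V : Set X, IsOpen U → IsOpen V → U.Nonempty → V.Nonempty →
    ∃ n : ℕ, (U ∩ f^[n] ⁻¹' V).Nonempty

/-- A syndetic set of natural numbers (bounded gaps). -/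
def Syndetic (A : Set ℕ) : Prop :=
  ∃ k : ℕ, ∀ n : ℕ, ∃ m, n ≤ m ∧ m ≤ n + k ∧ m ∈ A

/-- A minimal (almost periodic) point of `f`. -/
def MinimalPt [TopologicalSpace X] (f : X → X) (y : X) : Prop :=
  ∀ V ∈ nhds y, Syndetic {n : ℕ | f^[n] y ∈ V}

/-- Equicontinuity of a dynamical system on a uniform space. -/
def Equicont [UniformSpace X] (f : X → X) : Prop :=
  ∀ E ∈ uniformity X, ∃ D ∈ uniformity X, ∀ n : ℕ, ∀ p ∈ D, (f^[n] p.1, f^[n] p.2) ∈ E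

theorem shadowing_iff_iterates [UniformSpace X] (f : X → X)
    (hf : UniformContinuous f) :
    Shadowing f ↔ ∀ n : ℕ, 1 ≤ n → Shadowing (f^[n]) := by
  constructor
  · intro hs n hn E hE
    have hn0 : 0 < n := hn
    obtain ⟨D, hD, hDs⟩ := hs E hE
    refine ⟨D, hD, ?_⟩
    intro x hx
    set z : ℕ → X := fun m => f^[m % n] (x (m / n)) with hz
    have hzp : ∀ m, (f (z m), z (m + 1)) ∈ D := by
      intro m
      have hmlt : m % n < n := Nat.mod_lt m hn0
      have key : f (z m) = f^[m % n + 1] (x (m / n)) := by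
        simp [hz, Function.iterate_succ_apply']
      by_cases h : m % n + 1 = n
      · have e : m + 1 = (m / n + 1) * n := by
          have := Nat.div_add_mod m n
          nlinarith [Nat.div_add_mod m n]
        have e1 : (m + 1) % n = 0 := by rw [e]; exact Nat.mul_mod_left _ _
        have e2 : (m + 1) / n = m / n + 1 := by rw [e]; exact Nat.mul_div_cancel _ hn0
        have : z (m + 1) = x (m / n + 1) := by simp [hz, e1, e2]
        rw [this, key, h]
        exact hx (m / n)
      · have hlt : m % n + 1 < n := by omega
        have e : m + 1 = (m % n + 1) + n * (m / n) := by
          have := Nat.div_add_mod m n; omega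
        have e1 : (m + 1) % n = m % n + 1 := by
          rw [e, Nat.add_mul_mod_self_left, Nat.mod_eq_of_lt hlt]
        have e2 : (m + 1) / n = m / n := by
          rw [e, Nat.add_mul_div_left _ _ hn0, Nat.div_eq_of_lt hlt, Nat.zero_add]
        have : z (m + 1) = f^[m % n + 1] (x (m / n)) := by simp [hz, e1, e2]
        rw [this, key]
        exact refl_mem_uniformity hD
    obtain ⟨y, hy⟩ := hDs z hzp
    refine ⟨y, fun i => ?_⟩
    have h1 : z (i * n) = x i := by
      simp [hz, Nat.mul_mod_left, Nat.mul_div_cancel _ hn0]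
    have h2 : f^[i * n] y = (f^[n])^[i] y := by
      rw [mul_comm, Function.iterate_mul]
    have := hy (i * n)
    rwa [h1, h2] at this
  · intro h
    simpa using h 1 le_rfl
end

section
/- Let (X, f) be a topologically chain transitive dynamical system on a uniform space and E an entourage. Then there exists ι_E ∈ ℕ such that for every y ∈ X, ι_E is the greatest common divisor of the lengths of all E-chains from y to itself. -/
open Set Filter Function

variable {X : Type*}

lemma chain_concat {f : X → X} {E : Set (X × X)} {m n : ℕ} {x y z : X}
    (h1 : ChainFrom f E m x y) (h2 : ChainFrom f E n y z) :
    ChainFrom f E (m + n) x z := by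
  obtain ⟨c1, hc10, hc1m, hc1s⟩ := h1
  obtain ⟨c2, hc20, hc2n, hc2s⟩ := h2
  refine ⟨fun i => if i ≤ m then c1 i else c2 (i - m), ?_, ?_, ?_⟩
  · simp [hc10]
  · rcases Nat.eq_zero_or_pos n with h | h
    · subst h
      simp only [Nat.add_zero, le_refl, if_pos]
      rw [hc1m, ← hc20, hc2n]
    · have h1 : ¬ (m + n ≤ m) := by omega
      simp only [h1, if_false]
      rw [Nat.add_sub_cancel_left, hc2n]
  · intro i hi
    by_cases h1 : i + 1 ≤ m
    · have h2 : i ≤ m := by omega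
      simp only [h1, h2, if_pos]
      exact hc1s i (by omega)
    · by_cases h2 : i ≤ m
      · have him : i = m := by omega
        simp only [h1, h2, if_pos, if_neg, if_false]
        subst him
        rw [hc1m, Nat.add_sub_cancel_left, ← hc20]
        exact hc2s 0 (by omega)
      · simp only [h1, h2, if_false]
        have : i + 1 - m = (i - m) + 1 := by omega
        rw [this]
        exact hc2s (i - m) (by omega)

lemma exists_isGcdOfSet (S : Set ℕ) : ∃ g : ℕ, IsGcdOfSet g S := by
  obtain ⟨g, hg⟩ := (IsPrincipalIdealRing.principal
    (Ideal.span ((fun n : ℕ => (n : ℤ)) '' S))).principal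
  refine ⟨g.natAbs, ?_, ?_⟩
  · intro n hn
    have hmem : (n : ℤ) ∈ Ideal.span ((fun n : ℕ => (n : ℤ)) '' S) :=
      Ideal.subset_span ⟨n, hn, rfl⟩
    rw [hg, Ideal.submodule_span_eq, Ideal.mem_span_singleton] at hmem
    have := Int.natAbs_dvd_natAbs.mpr hmem
    simpa using this
  · intro d hd
    have hgm : g ∈ Ideal.span ((fun n : ℕ => (n : ℤ)) '' S) := by
      rw [hg, Ideal.submodule_span_eq]
      exact Ideal.mem_span_singleton_self g
    have hle : Ideal.span ((fun n : ℕ => (n : ℤ)) '' S) ≤ Ideal.span {(d : ℤ)} := by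
      rw [Ideal.span_le]
      rintro _ ⟨n, hn, rfl⟩
      rw [SetLike.mem_coe, Ideal.mem_span_singleton]
      show (d : ℤ) ∣ (n : ℤ)
      exact_mod_cast hd n hn
    have := hle hgm
    rw [Ideal.mem_span_singleton] at this
    have := Int.natAbs_dvd_natAbs.mpr this
    simpa using this

theorem exists_common_gcd_of_loops [UniformSpace X] (f : X → X)
    (hf : UniformContinuous f) (ht : ChainTransitive f)
    (E : Set (X × X)) (hE : E ∈ uniformity X) :
    ∃ ι : ℕ, 1 ≤ ι ∧ ∀ y : X, IsGcdOfSet ι (LoopLengths f E y) := by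
  rcases isEmpty_or_nonempty X with h | h
  · exact ⟨1, le_refl 1, fun y => (h.false y).elim⟩
  obtain ⟨x₀⟩ := h
  obtain ⟨ι, hι1, hι2⟩ := exists_isGcdOfSet (LoopLengths f E x₀)
  obtain ⟨n0, hn0, hc0⟩ := ht E hE x₀ x₀
  have hpos : 1 ≤ ι := by
    rcases Nat.eq_zero_or_pos ι with h0 | h0
    · exfalso
      have := hι1 n0 ⟨hn0, hc0⟩
      subst h0
      simp at this
      omega
    · exact h0
  refine ⟨ι, hpos, fun y => ?_⟩
  obtain ⟨a, ha1, hca⟩ := ht E hE x₀ y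
  obtain ⟨b, hb1, hcb⟩ := ht E hE y x₀
  constructor
  · intro n hn
    have l1 : (a + b) ∈ LoopLengths f E x₀ := ⟨by omega, chain_concat hca hcb⟩
    have l2 : (a + n + b) ∈ LoopLengths f E x₀ :=
      ⟨by omega, chain_concat (chain_concat hca hn.2) hcb⟩
    have d1 := hι1 _ l1
    have d2 := hι1 _ l2
    have heq : a + n + b = (a + b) + n := by ring
    rw [heq] at d2
    exact (Nat.dvd_add_right d1).mp d2
  · intro d hd
    apply hι2
    intro n hn
    have l1 : (b + a) ∈ LoopLengths f E y := ⟨by omega, chain_concat hcb hca⟩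
    have l2 : (b + n + a) ∈ LoopLengths f E y :=
      ⟨by omega, chain_concat (chain_concat hcb hn.2) hca⟩
    have d1 := hd _ l1
    have d2 := hd _ l2
    have heq : b + n + a = (b + a) + n := by ring
    rw [heq] at d2
    exact (Nat.dvd_add_right d1).mp d2
end

section
/- Let (X, f) be a topologically chain transitive dynamical system on a uniform space and E an entourage. Define x ∼_E y iff there exists an E-chain from x to y whose length is a multiple of ι_E (the common gcd of loop lengths). Then ∼_E is an equivalence relation on X. -/
open Set Filter Function

variable {X : Type*}

lemma chainFrom_trans {f : X → X} {E : Set (X × X)} {n m : ℕ} {x y z : X}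
    (h1 : ChainFrom f E n x y) (h2 : ChainFrom f E m y z) :
    ChainFrom f E (n + m) x z := by
  obtain ⟨c1, hc10, hc1n, hc1⟩ := h1
  obtain ⟨c2, hc20, hc2m, hc2⟩ := h2
  refine ⟨fun i => if i < n then c1 i else c2 (i - n), ?_, ?_, ?_⟩
  · by_cases h : 0 < n
    · simp [h, hc10]
    · have hn : n = 0 := by omega
      simp [hn, hc20, ← hc10, ← hc1n, hn]
  · have : ¬ (n + m < n) := by omega
    simp [this, hc2m]
  · intro i hi
    by_cases h : i < n
    · by_cases h' : i + 1 < n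
      · simpa [h, h'] using hc1 i h
      · have hin : i + 1 = n := by omega
        have := hc1 i h
        simp only [h, if_pos, h', if_neg, hin]
        simpa [Nat.sub_self, hc20, ← hc1n, ← hin] using this
    · have h' : ¬ (i + 1 < n) := by omega
      have := hc2 (i - n) (by omega)
      have e1 : i + 1 - n = i - n + 1 := by omega
      simpa [h, h', e1] using this

theorem simE_equivalence [UniformSpace X] (f : X → X)
    (hf : UniformContinuous f) (ht : ChainTransitive f)
    (E : Set (X × X)) (hE : E ∈ uniformity X)
    (ι : ℕ) (hι : 1 ≤ ι) (hgcd : ∀ y : X, IsGcdOfSet ι (LoopLengths f E y)) :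
    Equivalence (SimE f E ι) := by
  constructor
  · intro x
    exact ⟨0, dvd_zero ι, fun _ => x, rfl, rfl, fun i hi => absurd hi (Nat.not_lt_zero i)⟩
  · rintro x y ⟨n, hdn, hc⟩
    obtain ⟨m, hm1, hmc⟩ := ht E hE y x
    have hloop : n + m ∈ LoopLengths f E x := ⟨by omega, chainFrom_trans hc hmc⟩
    have hdnm : ι ∣ n + m := (hgcd x).1 _ hloop
    have hdm : ι ∣ m := by
      have := Nat.dvd_sub hdnm hdn
      simpa using this
    exact ⟨m, hdm, hmc⟩
  · rintro x y z ⟨n, hdn, hc⟩ ⟨m, hdm, hc'⟩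
    exact ⟨n + m, dvd_add hdn hdm, chainFrom_trans hc hc'⟩
end

section
/- Let (X, f) be topologically chain transitive on a uniform space, E an entourage, and x ∼_E y. Then every E-chain from x to y has length a multiple of ι_E. -/
open Set Filter Function

variable {X : Type*}

lemma chainFrom_concat {f : X → X} {E : Set (X × X)} {a b : ℕ} {x y z : X}
    (h1 : ChainFrom f E a x y) (h2 : ChainFrom f E b y z) :
    ChainFrom f E (a + b) x z := by
  obtain ⟨c1, hc10, hc1a, hc1⟩ := h1
  obtain ⟨c2, hc20, hc2b, hc2⟩ := h2
  refine ⟨fun i => if i < a then c1 i else c2 (i - a), ?_, ?_, ?_⟩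
  · rcases Nat.eq_zero_or_pos a with ha | ha
    · simp [ha, hc20, ← hc1a, ha, hc10]
    · simp [ha, hc10]
  · have : ¬ a + b < a := by omega
    simp [this, hc2b]
  · intro i hi
    dsimp only
    rcases lt_or_ge i a with h | h
    · have hfi : (if i < a then c1 i else c2 (i - a)) = c1 i := if_pos h
      rw [hfi]
      rcases lt_or_ge (i + 1) a with h' | h'
      · rw [if_pos h']; exact hc1 i h
      · have : i + 1 = a := by omega
        have : (if i + 1 < a then c1 (i + 1) else c2 (i + 1 - a)) = c1 (i + 1) := by
          rw [if_neg (by omega)]; simp [this, hc20, ← hc1a]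
        rw [this]; exact hc1 i h
    · have h1' : ¬ i < a := by omega
      have h2' : ¬ i + 1 < a := by omega
      rw [if_neg h1', if_neg h2']
      have : i + 1 - a = (i - a) + 1 := by omega
      rw [this]
      exact hc2 (i - a) (by omega)

theorem length_multiple_of_iota [UniformSpace X] (f : X → X)
    (hf : UniformContinuous f) (ht : ChainTransitive f)
    (E : Set (X × X)) (hE : E ∈ uniformity X)
    (ι : ℕ) (hι : 1 ≤ ι) (hgcd : ∀ y : X, IsGcdOfSet ι (LoopLengths f E y))
    (x y : X) (hxy : SimE f E ι x y) :
    ∀ m : ℕ, ChainFrom f E m x y → ι ∣ m := by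
  intro m hm
  obtain ⟨n, hιn, hn⟩ := hxy
  obtain ⟨k, hk1, hk⟩ := ht E hE y x
  have hloop1 : (m + k) ∈ LoopLengths f E x :=
    ⟨by omega, chainFrom_concat hm hk⟩
  have hloop2 : (n + k) ∈ LoopLengths f E x :=
    ⟨by omega, chainFrom_concat hn hk⟩
  have h1 : ι ∣ m + k := (hgcd x).1 _ hloop1
  have h2 : ι ∣ n + k := (hgcd x).1 _ hloop2
  have hk' : ι ∣ k := (Nat.dvd_add_right hιn).mp h2
  exact (Nat.dvd_add_iff_left hk').mpr h1
end

section
/- Let (X, f) be a topologically chain transitive dynamical system on a uniform space, E an entourage, and x ∈ X. Then the equivalence class [x]_E under ∼_E is both open and closed in X. -/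
open Set Filter Function

variable {X : Type*}

lemma simE_extend_aux [UniformSpace X] {f : X → X} (ht : ChainTransitive f)
    {E D : Set (X × X)} (hD : D ∈ uniformity X) (hDE : D ⊆ E)
    (hcomp : SetRel.comp D D ⊆ E)
    {ι : ℕ} (hgcd : ∀ y : X, IsGcdOfSet ι (LoopLengths f E y))
    {x y z : X} (h : SimE f E ι x y) (hyz : (y, z) ∈ D) :
    SimE f E ι x z := by
  obtain ⟨n, hn, c1, hc10, hc1n, hc1step⟩ := h
  obtain ⟨m, hm, c2, hc20, hc2m, hc2step⟩ := ht D hD y y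
  have hιm : ι ∣ m := (hgcd y).1 m ⟨hm, c2, hc20, hc2m, fun i hi => hDE (hc2step i hi)⟩
  refine ⟨n + m, hn.add hιm,
    fun i => if i < n then c1 i else if i < n + m then c2 (i - n) else z, ?_, ?_, ?_⟩
  · by_cases h0 : 0 < n
    · simp [h0, hc10]
    · have hn0 : n = 0 := by omega
      have : (0:ℕ) < n + m := by omega
      simp only [h0, if_false, this, if_true]
      rw [hn0]
      simp only [Nat.sub_zero]
      rw [hc20, ← hc1n, hn0, hc10]
  · simp
  · intro i hi
    by_cases h1 : i < n
    · by_cases h2 : i + 1 < n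
      · simpa [h1, h2] using hc1step i h1
      · have h3 : i + 1 = n := by omega
        have h4 : i + 1 < n + m := by omega
        have : c2 ((i + 1) - n) = c1 (i + 1) := by
          rw [h3, Nat.sub_self, hc20, ← hc1n]
        simp only [h1, if_true, h2, if_false, h4, if_true, this]
        exact hc1step i h1
    · by_cases h2 : i + 1 < n + m
      · have h5 : i < n + m := by omega
        have h6 : i + 1 - n = (i - n) + 1 := by omega
        simp only [h1, if_false, h5, if_true, show ¬ (i + 1 < n) by omega, if_false,
          h2, if_true, h6]
        exact hDE (hc2step (i - n) (by omega))
      · have h3 : i + 1 = n + m := by omega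
        have h5 : i < n + m := by omega
        have hmem : (f (c2 (i - n)), c2 ((i - n) + 1)) ∈ D := hc2step (i - n) (by omega)
        have h7 : (i - n) + 1 = m := by omega
        rw [h7, hc2m] at hmem
        simp only [h1, if_false, h5, if_true, show ¬ (i + 1 < n) by omega, if_false,
          show ¬ (i + 1 < n + m) by omega, if_false]
        exact hcomp ⟨y, hmem, hyz⟩

theorem simE_class_clopen [UniformSpace X] (f : X → X)
    (hf : UniformContinuous f) (ht : ChainTransitive f)
    (E : Set (X × X)) (hE : E ∈ uniformity X)
    (ι : ℕ) (hι : 1 ≤ ι) (hgcd : ∀ y : X, IsGcdOfSet ι (LoopLengths f E y))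
    (x : X) :
    IsOpen {y | SimE f E ι x y} ∧ IsClosed {y | SimE f E ι x y} := by
  obtain ⟨D, hD, hDsymm, hcomp⟩ := comp_symm_mem_uniformity_sets hE
  have hDE : D ⊆ E := fun p hp => hcomp ⟨p.2, hp, refl_mem_uniformity hD⟩
  have key : ∀ y z : X, SimE f E ι x y → (y, z) ∈ D → SimE f E ι x z :=
    fun y z h hyz => simE_extend_aux ht hD hDE hcomp hgcd h hyz
  constructor
  · rw [isOpen_iff_mem_nhds]
    intro y hy
    filter_upwards [UniformSpace.ball_mem_nhds y hD] with z hz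
    exact key y z hy hz
  · rw [← isOpen_compl_iff, isOpen_iff_mem_nhds]
    intro y hy
    filter_upwards [UniformSpace.ball_mem_nhds y hD] with z hz hsz
    exact hy (key z y hsz (by haveI := hDsymm; exact SetRel.symm D hz))
end

section
/- Let (X, f) be a topologically chain transitive dynamical system on a uniform space and E an entourage with ι_E = 1. Then for every x ∈ X there exist two E-chains from x to itself with relatively prime lengths. -/
open Set Filter Function

variable {X : Type*}

lemma loop_add {f : X → X} {E : Set (X × X)} {x : X} {n m : ℕ}
    (hn : n ∈ LoopLengths f E x) (hm : m ∈ LoopLengths f E x) :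
    n + m ∈ LoopLengths f E x :=
  ⟨le_trans hn.1 (Nat.le_add_right n m), chainFrom_trans hn.2 hm.2⟩

lemma loop_smul {f : X → X} {E : Set (X × X)} {x : X} {n k : ℕ} (hk : 1 ≤ k)
    (hn : n ∈ LoopLengths f E x) : k * n ∈ LoopLengths f E x := by
  induction k with
  | zero => omega
  | succ k ih =>
    rcases Nat.eq_zero_or_pos k with hk0 | hk0
    · simpa [hk0] using hn
    · have := loop_add (ih hk0) hn
      simpa [Nat.succ_mul] using this

lemma loop_sum {f : X → X} {E : Set (X × X)} {x : X} {ι : Type*} (s : Finset ι)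
    (g : ι → ℕ) (hg : ∀ i ∈ s, g i ∈ LoopLengths f E x) (hs : s.Nonempty) :
    ∑ i ∈ s, g i ∈ LoopLengths f E x := by
  classical
  induction s using Finset.cons_induction with
  | empty => exact absurd hs (by simp)
  | cons a t ha ih =>
    rw [Finset.sum_cons]
    rcases Finset.eq_empty_or_nonempty t with ht | ht
    · simpa [ht] using hg a (Finset.mem_cons_self a t)
    · exact loop_add (hg a (Finset.mem_cons_self a t))
        (ih (fun i hi => hg i (Finset.mem_cons_of_mem hi)) ht)

theorem exists_coprime_loops [UniformSpace X] (f : X → X)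
    (hf : UniformContinuous f) (ht : ChainTransitive f)
    (E : Set (X × X)) (hE : E ∈ uniformity X)
    (hgcd : ∀ y : X, IsGcdOfSet 1 (LoopLengths f E y)) :
    ∀ x : X, ∃ n ∈ LoopLengths f E x, ∃ m ∈ LoopLengths f E x, Nat.gcd n m = 1 := by
  intro x
  obtain ⟨a, ha1, hach⟩ := ht E hE x x
  have haS : a ∈ LoopLengths f E x := ⟨ha1, hach⟩
  by_cases hA : a = 1
  · exact ⟨1, hA ▸ haS, 1, hA ▸ haS, rfl⟩
  have ha0 : a ≠ 0 := by omega
  have ha2 : 1 < a := by omega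
  -- for each prime p there is a loop length not divisible by p
  have hb : ∀ p : ℕ, ∃ b, b ∈ LoopLengths f E x ∧ (p.Prime → ¬ p ∣ b) := by
    intro p
    by_cases hp : p.Prime
    · by_contra hc
      push_neg at hc
      have hdvd : ∀ n ∈ LoopLengths f E x, p ∣ n := by
        intro n hn
        by_contra hnd
        exact hnd (hc n hn).2
      have : p ∣ 1 := (hgcd x).2 p hdvd
      exact absurd (Nat.dvd_one.mp this) hp.one_lt.ne'
    · exact ⟨a, haS, fun h => absurd h hp⟩
  choose b hbS hbnd using hb
  set m : ℕ := ∑ q ∈ a.primeFactors, ((a / q ^ a.factorization q)) * b q with hm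
  have hpf : a.primeFactors.Nonempty := Nat.nonempty_primeFactors.mpr ha2
  have hmS : m ∈ LoopLengths f E x := by
    refine loop_sum _ _ (fun q hq => ?_) hpf
    have h1 : 1 ≤ (a / q ^ a.factorization q) := Nat.ordCompl_pos q ha0
    exact loop_smul h1 (hbS q)
  refine ⟨a, haS, m, hmS, ?_⟩
  by_contra hg
  obtain ⟨p, hp, hpd⟩ := Nat.exists_prime_and_dvd hg
  have hpa : p ∣ a := hpd.trans (Nat.gcd_dvd_left a m)
  have hpm : p ∣ m := hpd.trans (Nat.gcd_dvd_right a m)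
  have hpmem : p ∈ a.primeFactors := Nat.mem_primeFactors.mpr ⟨hp, hpa, ha0⟩
  classical
  have hsplit : m = ((a / p ^ a.factorization p)) * b p
      + ∑ q ∈ a.primeFactors.erase p, ((a / q ^ a.factorization q)) * b q := by
    rw [hm, ← Finset.add_sum_erase _ _ hpmem]
  have hrest : p ∣ ∑ q ∈ a.primeFactors.erase p, ((a / q ^ a.factorization q)) * b q := by
    refine Finset.dvd_sum fun q hq => ?_
    have hqmem : q ∈ a.primeFactors := Finset.mem_of_mem_erase hq
    have hq' : q.Prime := Nat.prime_of_mem_primeFactors hqmem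
    have hne : q ≠ p := Finset.ne_of_mem_erase hq
    have hcop : Nat.Coprime p (q ^ a.factorization q) :=
      Nat.Coprime.pow_right _ ((Nat.coprime_primes hp hq').mpr (Ne.symm hne))
    have : p ∣ q ^ a.factorization q * (a / q ^ a.factorization q) := by
      rw [Nat.ordProj_mul_ordCompl_eq_self a q]; exact hpa
    exact dvd_mul_of_dvd_left (hcop.dvd_of_dvd_mul_left this) _
  have hterm : p ∣ ((a / p ^ a.factorization p)) * b p := by
    have := Nat.dvd_sub hpm hrest
    rwa [hsplit, Nat.add_sub_cancel] at this
  rcases hp.dvd_mul.mp hterm with h | h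
  · exact Nat.not_dvd_ordCompl hp ha0 h
  · exact hbnd p hp h
end

section
/- Let (X, f) be a topologically chain transitive dynamical system on a compact uniform space. Then for each entourage E there exists M ∈ ℕ such that for all x, y ∈ X there is an E-chain from x to y of length at most M. -/
open Set Filter Function

variable {X : Type*}

theorem bounded_chain_length [UniformSpace X] [CompactSpace X]
    (f : X → X) (hf : UniformContinuous f) (ht : ChainTransitive f) :
    ∀ E ∈ uniformity X, ∃ M : ℕ, ∀ x y : X,
      ∃ n : ℕ, 1 ≤ n ∧ n ≤ M ∧ ChainFrom f E n x y := by
  intro E hE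
  obtain ⟨D, hD, hDsymm, hDE⟩ := comp_comp_symm_mem_uniformity_sets hE
  have hrefl : ∀ a : X, (a, a) ∈ D := fun a => refl_mem_uniformity hD
  have hcomp3 : ∀ a b c d : X, (a, b) ∈ D → (b, c) ∈ D → (c, d) ∈ D → (a, d) ∈ E := by
    intro a b c d h1 h2 h3
    exact hDE ⟨c, ⟨b, h1, h2⟩, h3⟩
  set D' : Set (X × X) := D ∩ {p | (f p.1, f p.2) ∈ D} with hD'def
  have hD' : D' ∈ uniformity X := inter_mem hD (hf hD)
  obtain ⟨t, ht_cover⟩ := isCompact_univ.elim_nhds_subcover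
    (fun z => UniformSpace.ball z D') (fun z _ => UniformSpace.ball_mem_nhds z hD')
  have key : ∀ z w : X, ∃ n, 1 ≤ n ∧ ChainFrom f D n z w := by
    intro z w
    obtain ⟨n, hn1, hn2⟩ := ht D hD z w
    exact ⟨n, hn1, hn2⟩
  choose N hN1 hN2 using key
  refine ⟨t.sup fun z => t.sup fun w => N z w, ?_⟩
  intro x y
  have hx : x ∈ ⋃ z ∈ t, UniformSpace.ball z D' := ht_cover.2 (mem_univ x)
  have hy : y ∈ ⋃ z ∈ t, UniformSpace.ball z D' := ht_cover.2 (mem_univ y)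
  simp only [mem_iUnion] at hx hy
  obtain ⟨z, hz, hxz⟩ := hx
  obtain ⟨w, hw, hyw⟩ := hy
  have hzx : (z, x) ∈ D' := hxz
  have hwy : (w, y) ∈ D := hyw.1
  have hfx : (f x, f z) ∈ D := hDsymm.symm _ _ hzx.2
  refine ⟨N z w, hN1 z w, ?_, ?_⟩
  · exact le_trans (Finset.le_sup (f := fun w' => N z w') hw)
      (Finset.le_sup (f := fun z' => t.sup fun w' => N z' w') hz)
  · obtain ⟨c, hc0, hcn, hcst⟩ := hN2 z w
    set n := N z w with hn
    have hn1 : 1 ≤ n := hN1 z w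
    refine ⟨fun i => if i = 0 then x else if i = n then y else c i, by simp, ?_, ?_⟩
    · simp [Nat.one_le_iff_ne_zero.mp hn1, (Nat.one_le_iff_ne_zero.mp hn1 : n ≠ 0).symm]
    · intro i hi
      rcases eq_or_ne i 0 with rfl | hi0
      · simp only [if_pos rfl]
        rcases eq_or_ne n 1 with hne | hne
        · have h1 : (1 : ℕ) = n := hne.symm
          simp only [if_neg one_ne_zero, if_pos h1]
          have := hcst 0 hi
          rw [hc0] at this
          have hw' : c 1 = w := hne ▸ hcn
          rw [hw'] at this
          exact hcomp3 _ _ _ _ hfx this hwy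
        · have h1 : (1 : ℕ) ≠ n := fun h => hne h.symm
          simp only [if_neg one_ne_zero, if_neg h1]
          have := hcst 0 hi
          rw [hc0] at this
          exact hcomp3 _ _ _ _ hfx this (hrefl _)
      · rcases eq_or_ne (i + 1) n with hin | hin
        · have hine : i ≠ n := fun h => by omega
          simp only [if_neg hi0, if_neg hine, if_pos hin]
          have := hcst i hi
          rw [show c (i + 1) = w by rw [hin]; exact hcn] at this
          exact hcomp3 _ _ _ _ (hrefl _) this hwy
        · have hine : i ≠ n := by omega
          have hi10 : i + 1 ≠ 0 := by omega
          simp only [if_neg hi0, if_neg hine, if_neg hi10, if_neg hin]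
          exact hcomp3 _ _ _ _ (hrefl _) (hcst i hi) (hrefl _)
end

section
/- Let (X, f) be a dynamical system on a Hausdorff uniform space and x ∈ Ω(f) a non-wandering point. Then for every entourage U, the set N_f(U[x], U[x]) = {n ∈ ℕ₀ : U[x] ∩ f^{-n}(U[x]) ≠ ∅} is infinite. -/
open Set Filter Function

variable {X : Type*}

theorem nonwandering_return_times_infinite [UniformSpace X] [T2Space X]
    (f : X → X) (hf : UniformContinuous f)
    (x : X) (hx : NonWandering f x)
    (U : Set (X × X)) (hU : U ∈ uniformity X) :
    {n : ℕ | ({y | (x, y) ∈ U} ∩ f^[n] ⁻¹' {y | (x, y) ∈ U}).Nonempty}.Infinite := by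
  apply Set.infinite_of_forall_exists_gt
  intro N
  have hxU : (x, x) ∈ U := refl_mem_uniformity hU
  by_cases hper : ∃ p, 1 ≤ p ∧ f^[p] x = x
  · obtain ⟨p, hp1, hpx⟩ := hper
    refine ⟨p * (N + 1), ?_, ?_⟩
    · refine ⟨x, hxU, ?_⟩
      simp only [Set.mem_preimage, Function.iterate_mul]
      rw [Function.iterate_fixed hpx]
      exact hxU
    · calc N < N + 1 := Nat.lt_succ_self N
        _ ≤ p * (N + 1) := Nat.le_mul_of_pos_left _ hp1
  · push_neg at hper
    have hcont : Continuous f := hf.continuous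
    have hVk : ∀ k : ℕ, ∃ V, V ∈ nhds x ∧ (1 ≤ k → ∀ y ∈ V, f^[k] y ∉ V) := by
      intro k
      by_cases hk : 1 ≤ k
      · have hne : f^[k] x ≠ x := hper k hk
        obtain ⟨A, B, hA, hB, hxA, hxB, hAB⟩ := t2_separation hne
        refine ⟨B ∩ f^[k] ⁻¹' A, Filter.inter_mem (hB.mem_nhds hxB)
          (((hcont.iterate k).continuousAt (x := x)).preimage_mem_nhds (hA.mem_nhds hxA)), ?_⟩
        rintro _ y ⟨_, hyA⟩ ⟨h1, _⟩
        exact Set.disjoint_left.mp hAB hyA h1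
      · exact ⟨Set.univ, Filter.univ_mem, fun h => absurd h hk⟩
    choose V hVmem hVprop using hVk
    set W : Set X := {y | (x, y) ∈ U} ∩ ⋂ k ∈ Finset.Icc 1 N, V k with hWdef
    have hWnhds : W ∈ nhds x := by
      refine Filter.inter_mem (mem_nhds_left x hU) ?_
      exact (Filter.biInter_finset_mem _).mpr fun k _ => hVmem k
    obtain ⟨n, hn1, y, hyW, hyW2⟩ := hx W hWnhds
    refine ⟨n, ⟨y, hyW.1, hyW2.1⟩, ?_⟩
    by_contra hle
    push_neg at hle
    have hnIcc : n ∈ Finset.Icc 1 N := Finset.mem_Icc.mpr ⟨hn1, hle⟩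
    have hyVn : y ∈ V n := Set.mem_iInter₂.mp hyW.2 n hnIcc
    have hfyVn : f^[n] y ∈ V n := Set.mem_iInter₂.mp hyW2.2 n hnIcc
    exact hVprop n hn1 y hyVn hfyVn
end

section
/- Let (X, f) be a dynamical system on a uniform space with the topological shadowing property, and let x ∈ Ω(f). Then for every entourage U there exist k ∈ ℕ and a point w ∈ U[x] such that f^{nk}(w) ∈ U[x] for all n ∈ ℕ. -/
open Set Filter Function

variable {X : Type*}

theorem shadowing_nonwandering_periodic_returns [UniformSpace X]
    (f : X → X) (hf : UniformContinuous f) (hsh : Shadowing f)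
    (x : X) (hx : NonWandering f x)
    (U : Set (X × X)) (hU : U ∈ uniformity X) :
    ∃ k : ℕ, 1 ≤ k ∧ ∃ w ∈ {y | (x, y) ∈ U},
      ∀ n : ℕ, 1 ≤ n → f^[n * k] w ∈ {y | (x, y) ∈ U} := by
  obtain ⟨V, hV, hVsymm, hVU⟩ := comp_symm_mem_uniformity_sets hU
  obtain ⟨D, hD, hDsh⟩ := hsh V hV
  obtain ⟨D₁, hD₁, hD₁symm, hD₁sub⟩ := comp_symm_mem_uniformity_sets (inter_mem hD hV)
  have hD₁V : D₁ ⊆ V := by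
    intro p hp
    exact (hD₁sub ⟨p.2, hp, refl_mem_uniformity hD₁⟩).2
  have hball : {y | (x, y) ∈ D₁} ∈ nhds x := UniformSpace.ball_mem_nhds x hD₁
  obtain ⟨k, hk, z, hz⟩ := hx _ hball
  have hz1 : (x, z) ∈ D₁ := hz.1
  have hz2 : (x, f^[k] z) ∈ D₁ := hz.2
  set c : ℕ → X := fun i => f^[i % k] z with hc
  have hpo : ∀ i, (f (c i), c (i + 1)) ∈ D := by
    intro i
    have hkpos : 0 < k := hk
    have h1 : f (c i) = f^[i % k + 1] z := (Function.iterate_succ_apply' f _ z).symm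
    have hmod : (i + 1) % k = (i % k + 1) % k := (Nat.mod_add_mod i k 1).symm
    rcases eq_or_lt_of_le (Nat.succ_le_of_lt (Nat.mod_lt i hkpos)) with heq | hlt
    · rw [Nat.succ_eq_add_one] at heq
      have h2 : c (i + 1) = z := by
        show f^[(i+1) % k] z = z
        rw [hmod, heq, Nat.mod_self]
        rfl
      rw [h1, h2, heq]
      exact (hD₁sub ⟨x, hD₁symm.symm _ _ hz2, hz1⟩).1
    · have h2 : c (i + 1) = f^[i % k + 1] z := by
        show f^[(i+1) % k] z = _
        rw [hmod, Nat.mod_eq_of_lt hlt]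
      rw [h1, h2]
      exact refl_mem_uniformity hD
  obtain ⟨y, hy⟩ := hDsh c hpo
  refine ⟨k, hk, y, ?_, ?_⟩
  · have h0 : (y, z) ∈ V := by simpa [hc] using hy 0
    exact hVU ⟨z, hD₁V hz1, hVsymm.symm _ _ h0⟩
  · intro n hn
    have hmul : (n * k) % k = 0 := Nat.mul_mod_left n k
    have hnk : (f^[n * k] y, z) ∈ V := by
      have := hy (n * k)
      simpa [hc, hmul] using this
    exact hVU ⟨z, hD₁V hz1, hVsymm.symm _ _ hnk⟩
end

section
/- Let (X, f) be a dynamical system on a compact uniform space with the topological shadowing property, and x ∈ Ω(f). Then for every entourage U there exist k ∈ ℕ and a minimal point y ∈ U[x] ∩ M(f) such that f^{nk}(y) ∈ U[x] for all n ∈ ℕ. -/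
open Set Filter Function

variable {X : Type*}

private lemma mod_succ_wrap {k n : ℕ} (h : n % k + 1 = k) : (n + 1) % k = 0 := by
  rcases Nat.eq_or_lt_of_le (show 1 ≤ k by omega) with h1 | h1
  · rw [← h1]; exact Nat.mod_one _
  · rw [Nat.add_mod, Nat.mod_eq_of_lt h1, h, Nat.mod_self]

private lemma mod_succ_nowrap {k n : ℕ} (hk : 0 < k) (h : n % k + 1 < k) :
    (n + 1) % k = n % k + 1 := by
  have h1 : 1 % k = 1 := Nat.mod_eq_of_lt (by omega)
  rw [Nat.add_mod, h1, Nat.mod_eq_of_lt h]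

private lemma exists_minimalPt_of_invariant [TopologicalSpace X] [CompactSpace X]
    {g : X → X} (hg : Continuous g) {A : Set X} (hA : IsClosed A)
    (hne : A.Nonempty) (hinv : MapsTo g A A) :
    ∃ y ∈ A, ∀ V ∈ nhds y, Syndetic {n : ℕ | g^[n] y ∈ V} := by
  have hzorn : ∀ c ⊆ {B : Set X | B.Nonempty ∧ B ⊆ A ∧ IsClosed B ∧ MapsTo g B B},
      IsChain (· ⊆ ·) c → c.Nonempty →
      ∃ lb ∈ {B : Set X | B.Nonempty ∧ B ⊆ A ∧ IsClosed B ∧ MapsTo g B B},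
        ∀ s ∈ c, lb ⊆ s := by
    rintro c hcS hchain ⟨B₀, hB₀⟩
    haveI : Nonempty c := ⟨⟨B₀, hB₀⟩⟩
    refine ⟨⋂ B : c, (B : Set X), ⟨?_, ?_, ?_, ?_⟩, fun s hs => iInter_subset _ (⟨s, hs⟩ : c)⟩
    · refine IsCompact.nonempty_iInter_of_directed_nonempty_isCompact_isClosed _
        (fun B C => ?_) (fun B => (hcS B.2).1) (fun B => (hcS B.2).2.2.1.isCompact)
        (fun B => (hcS B.2).2.2.1)
      rcases hchain.total B.2 C.2 with h | h
      · exact ⟨B, subset_rfl, h⟩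
      · exact ⟨C, h, subset_rfl⟩
    · exact (iInter_subset _ (⟨B₀, hB₀⟩ : c)).trans (hcS hB₀).2.1
    · exact isClosed_iInter fun B => (hcS B.2).2.2.1
    · intro p hp
      rw [mem_iInter] at hp ⊢
      exact fun B => (hcS B.2).2.2.2 (hp B)
  obtain ⟨M, hMA, hM⟩ := zorn_superset_nonempty
      {B : Set X | B.Nonempty ∧ B ⊆ A ∧ IsClosed B ∧ MapsTo g B B} hzorn A
      ⟨hne, subset_rfl, hA, hinv⟩
  obtain ⟨hMne, hMsubA, hMcl, hMinv⟩ := hM.prop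
  obtain ⟨y, hyM⟩ := hMne
  refine ⟨y, hMsubA hyM, fun V hV => ?_⟩
  obtain ⟨W, hWV, hWo, hyW⟩ := mem_nhds_iff.mp hV
  have hcov : M ⊆ ⋃ m : ℕ, g^[m] ⁻¹' W := by
    by_contra hcon
    rw [not_subset] at hcon
    obtain ⟨p, hpM, hp⟩ := hcon
    have hpW : ∀ m : ℕ, g^[m] p ∉ W := by
      intro m hm
      exact hp (mem_iUnion.mpr ⟨m, hm⟩)
    have hM'S : (M ∩ ⋂ m : ℕ, g^[m] ⁻¹' Wᶜ) ∈
        {B : Set X | B.Nonempty ∧ B ⊆ A ∧ IsClosed B ∧ MapsTo g B B} := by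
      refine ⟨⟨p, hpM, mem_iInter.mpr fun m => hpW m⟩,
        inter_subset_left.trans hMsubA,
        hMcl.inter (isClosed_iInter fun m => (hWo.isClosed_compl).preimage (hg.iterate m)), ?_⟩
      rintro q ⟨hqM, hq⟩
      rw [mem_iInter] at hq
      refine ⟨hMinv hqM, mem_iInter.mpr fun m => ?_⟩
      show g^[m] (g q) ∈ Wᶜ
      rw [← Function.iterate_succ_apply]
      exact hq (m + 1)
    have := hM.2 hM'S inter_subset_left
    have hyW' : g^[0] y ∈ Wᶜ := mem_iInter.mp (this hyM).2 0
    exact hyW' (by simpa using hyW)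
  obtain ⟨t, ht⟩ := hMcl.isCompact.elim_finite_subcover (fun m : ℕ => g^[m] ⁻¹' W)
      (fun m => hWo.preimage (hg.iterate m)) hcov
  refine ⟨t.sup id, fun n => ?_⟩
  have hyn : g^[n] y ∈ M := hMinv.iterate n hyM
  obtain ⟨m, hmt, hmW⟩ := mem_iUnion₂.mp (ht hyn)
  refine ⟨m + n, Nat.le_add_left _ _, by have := Finset.le_sup (f := id) hmt; simp at this; omega, ?_⟩
  show g^[m + n] y ∈ V
  rw [Function.iterate_add_apply]
  exact hWV hmW

private lemma minimalPt_of_iterate [TopologicalSpace X] {f : X → X} {k : ℕ} (hk : 1 ≤ k) {y : X}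
    (h : ∀ V ∈ nhds y, Syndetic {n : ℕ | (f^[k])^[n] y ∈ V}) : MinimalPt f y := by
  intro V hV
  obtain ⟨K, hK⟩ := h V hV
  refine ⟨k * K + k, fun n => ?_⟩
  obtain ⟨m, hm1, hm2, hm3⟩ := hK (n / k + 1)
  have hd := Nat.div_add_mod n k
  have hr : n % k < k := Nat.mod_lt _ (by omega)
  have h1 : k * (n / k + 1) ≤ k * m := Nat.mul_le_mul_left k hm1
  have h2 : k * m ≤ k * (n / k + 1 + K) := Nat.mul_le_mul_left k hm2
  rw [Nat.mul_add, Nat.mul_one] at h1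
  rw [Nat.mul_add, Nat.mul_add, Nat.mul_one] at h2
  refine ⟨k * m, ?_, ?_, ?_⟩
  · omega
  · omega
  · show f^[k * m] y ∈ V
    rw [Function.iterate_mul]
    exact hm3

theorem shadowing_nonwandering_minimal_returns [UniformSpace X] [CompactSpace X]
    (f : X → X) (hf : UniformContinuous f) (hsh : Shadowing f)
    (x : X) (hx : NonWandering f x)
    (U : Set (X × X)) (hU : U ∈ uniformity X) :
    ∃ k : ℕ, 1 ≤ k ∧ ∃ y : X, (x, y) ∈ U ∧ MinimalPt f y ∧
      ∀ n : ℕ, 1 ≤ n → f^[n * k] y ∈ {z | (x, z) ∈ U} := by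
  obtain ⟨U', hU', hU'U⟩ := comp_mem_uniformity_sets hU
  obtain ⟨E₁, hE₁, hE₁c, hE₁U⟩ := mem_uniformity_isClosed hU'
  have hE : SetRel.symmetrize E₁ ∈ uniformity X := symmetrize_mem_uniformity hE₁
  have hEc : IsClosed (SetRel.symmetrize E₁) := hE₁c.inter (hE₁c.preimage continuous_swap)
  have hEsymm : SetRel.IsSymm (SetRel.symmetrize E₁) := inferInstance
  have hEU' : SetRel.symmetrize E₁ ⊆ U' := (SetRel.symmetrize_subset_self (R := E₁)).trans hE₁U
  set E := SetRel.symmetrize E₁ with hEdef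
  obtain ⟨D, hD, hDsh⟩ := hsh E hE
  obtain ⟨D₂, hD₂, hD₂symm, hD₂comp⟩ := comp_symm_mem_uniformity_sets (inter_mem hD hU')
  have hD₂D : SetRel.comp D₂ D₂ ⊆ D := fun p hp => (hD₂comp hp).1
  have hD₂U' : D₂ ⊆ U' := fun p hp => (hD₂comp (subset_comp_self_of_mem_uniformity hD₂ hp)).2
  obtain ⟨k, hk1, z, hz⟩ := hx (UniformSpace.ball x D₂) (UniformSpace.ball_mem_nhds x hD₂)
  have hxz : (x, z) ∈ D₂ := hz.1
  have hxfz : (x, f^[k] z) ∈ D₂ := hz.2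
  have hwrap : (f^[k] z, z) ∈ D :=
    hD₂D (SetRel.prodMk_mem_comp (hD₂symm.symm _ _ hxfz) hxz)
  set c : ℕ → X := fun n => f^[n % k] z with hc
  have hpo : ∀ n, (f (c n), c (n + 1)) ∈ D := by
    intro n
    have hrk : n % k < k := Nat.mod_lt _ (by omega)
    by_cases h : n % k + 1 = k
    · have h1 : (n + 1) % k = 0 := mod_succ_wrap h
      have h2 : f (c n) = f^[k] z := by
        have ht := Function.iterate_succ_apply' f (n % k) z
        rw [Nat.succ_eq_add_one, h] at ht
        exact ht.symm
      have h3 : c (n + 1) = z := by simp [hc, h1]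
      rw [h2, h3]
      exact hwrap
    · have h1 : (n + 1) % k = n % k + 1 := mod_succ_nowrap (by omega) (by omega)
      have h2 : f (c n) = c (n + 1) := by
        simp only [hc, ← Function.iterate_succ_apply' f (n % k) z, h1]
      rw [h2]
      exact refl_mem_uniformity hD
  obtain ⟨y₀, hy₀⟩ := hDsh c hpo
  set A : Set X := {y | ∀ n : ℕ, (f^[n * k] y, z) ∈ E} with hAdef
  have hy₀A : y₀ ∈ A := by
    intro n
    have h := hy₀ (n * k)
    simpa [hc, Nat.mul_mod_left] using h
  have hAc : IsClosed A := by
    have : A = ⋂ n : ℕ, (fun y => (f^[n * k] y, z)) ⁻¹' E := by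
      ext w; simp [hAdef]
    rw [this]
    exact isClosed_iInter fun n =>
      hEc.preimage ((hf.continuous.iterate _).prodMk continuous_const)
  have hAinv : MapsTo (f^[k]) A A := by
    intro y hy n
    show (f^[n * k] (f^[k] y), z) ∈ E
    rw [← Function.iterate_add_apply]
    have he : n * k + k = (n + 1) * k := by ring
    rw [he]
    exact hy (n + 1)
  obtain ⟨y, hyA, hymin⟩ :=
    exists_minimalPt_of_invariant (hf.continuous.iterate k) hAc ⟨y₀, hy₀A⟩ hAinv
  have key : ∀ n : ℕ, (x, f^[n * k] y) ∈ U := by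
    intro n
    exact hU'U (SetRel.prodMk_mem_comp (hD₂U' hxz) (hEU' (hEsymm.symm _ _ (hyA n))))
  refine ⟨k, hk1, y, ?_, ?_, fun n _ => key n⟩
  · have h0 := key 0
    simpa using h0
  · exact minimalPt_of_iterate hk1 hymin
end

section
/- Let (X, f) be a dynamical system on a compact uniform space. If f has the topological shadowing property, then the restriction of f to its non-wandering set Ω(f) also has the topological shadowing property (with pseudo-orbits in Ω(f) shadowed by points of Ω(f)). -/
open Set Filter Function

variable {X : Type*}

section Aux

variable [UniformSpace X]

private lemma comp3_mem {S : Set (X × X)} (hS : S ∈ uniformity X) :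
    ∃ T ∈ uniformity X, SetRel.IsSymm T ∧ T ⊆ S ∧
      ∀ {a b c d : X}, (a, b) ∈ T → (b, c) ∈ T → (c, d) ∈ T → (a, d) ∈ S := by
  obtain ⟨T, hT, hsym, hcomp⟩ := comp_comp_symm_mem_uniformity_sets hS
  refine ⟨T, hT, hsym, ?_, ?_⟩
  · rintro ⟨a, b⟩ hab
    exact hcomp ⟨b, ⟨b, hab, refl_mem_uniformity hT⟩, refl_mem_uniformity hT⟩
  · intro a b c d hab hbc hcd
    exact hcomp ⟨c, ⟨b, hab, hbc⟩, hcd⟩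

private lemma uc_ent {f : X → X} (hf : UniformContinuous f)
    {S : Set (X × X)} (hS : S ∈ uniformity X) :
    ∃ T ∈ uniformity X, SetRel.IsSymm T ∧ T ⊆ S ∧
      ∀ {a b : X}, (a, b) ∈ T → (f a, f b) ∈ S := by
  have h2 : {p : X × X | (f p.1, f p.2) ∈ S} ∈ uniformity X := hf hS
  refine ⟨SetRel.symmetrize (S ∩ {p : X × X | (f p.1, f p.2) ∈ S}),
    symmetrize_mem_uniformity (Filter.inter_mem hS h2), SetRel.isSymm_symmetrize, ?_, ?_⟩
  · exact SetRel.symmetrize_subset_self.trans inter_subset_left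
  · intro a b h
    exact (SetRel.symmetrize_subset_self h).2

private lemma backchain {f : X → X} (hf : UniformContinuous f)
    {G : Set (X × X)} (hG : G ∈ uniformity X) :
    ∃ D ∈ uniformity X, D ⊆ G ∧ ∀ x x' : X, NonWandering f x → (f x, x') ∈ D →
      ∃ m, 1 ≤ m ∧ ChainFrom f G m x' x := by
  obtain ⟨G₁, hG₁, hG₁s, hG₁sub, hG₁c⟩ := comp3_mem hG
  obtain ⟨A, hA, hAs, hAsub, hAuc⟩ := uc_ent hf hG₁
  obtain ⟨A₁, hA₁, hA₁s, hA₁sub, hA₁c⟩ := comp3_mem hA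
  obtain ⟨B, hB, hBs, hBsub, hBuc⟩ := uc_ent hf hA₁
  have hBG₁ : B ⊆ G₁ := fun p hp => hAsub (hA₁sub (hBsub hp))
  have hBG : B ⊆ G := fun p hp => hG₁sub (hBG₁ hp)
  refine ⟨B, hB, hBG, ?_⟩
  intro x x' hx hD
  obtain ⟨n, hn1, u, hu⟩ := hx (UniformSpace.ball x B) (UniformSpace.ball_mem_nhds x hB)
  have hxu : (x, u) ∈ B := hu.1
  have hxnu : (x, f^[n] u) ∈ B := hu.2
  have h1 : (x', f x) ∈ B := hBs.symm _ _ hD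
  have h2 : (f x, f u) ∈ A₁ := hBuc hxu
  have h5 : (f^[n] u, x) ∈ B := hBs.symm _ _ hxnu
  have hrefl₁ : ∀ a : X, (a, a) ∈ A₁ := fun a => refl_mem_uniformity hA₁
  have h3 : (x', f u) ∈ A := hA₁c (hBsub h1) h2 (hrefl₁ _)
  have h4 : (f x', f (f u)) ∈ G₁ := hAuc h3
  by_cases hn3 : 3 ≤ n
  · -- long chain of length n - 1
    refine ⟨n - 1, by omega,
      fun j => if j = 0 then x' else if j = n - 1 then x else f^[j + 1] u, by simp, ?_, ?_⟩
    · simp [show n - 1 ≠ 0 by omega]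
    · intro i hi
      by_cases hi0 : i = 0
      · subst hi0
        simp only [if_pos rfl, if_neg (show (1:ℕ) ≠ 0 by omega),
          if_neg (show 1 ≠ n - 1 by omega)]
        have : f^[1 + 1] u = f (f u) := by
          rw [Function.iterate_add_apply, Function.iterate_one]
        rw [this]
        exact hG₁sub h4
      · by_cases hilast : i + 1 = n - 1
        · simp only [if_neg hi0, if_neg (show i ≠ n - 1 by omega),
            if_neg (show i + 1 ≠ 0 by omega), if_pos hilast]
          have h' : f (f^[i + 1] u) = f^[(i + 1) + 1] u :=
            (Function.iterate_succ_apply' f (i + 1) u).symm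
          rw [h', show (i + 1) + 1 = n by omega]
          exact hBG h5
        · simp only [if_neg hi0, if_neg (show i ≠ n - 1 by omega),
            if_neg (show i + 1 ≠ 0 by omega), if_neg hilast]
          rw [Function.iterate_succ_apply' f (i + 1) u]
          exact refl_mem_uniformity hG
  · -- short chain of length 1
    have hshort : (f x', x) ∈ G := by
      have hn12 : n = 1 ∨ n = 2 := by omega
      rcases hn12 with h | h
      · subst h
        have h5' : (f u, x) ∈ B := by simpa using h5
        have hx'x : (x', x) ∈ A := hA₁c (hBsub h1) h2 (hBsub h5')
        have hfxx : (f x, x) ∈ A := hA₁c h2 (hBsub h5') (hrefl₁ _)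
        exact hG₁c (hAuc hx'x) (hAsub hfxx) (refl_mem_uniformity hG₁)
      · subst h
        have h4' : (f x', f^[2] u) ∈ G₁ := by
          have : f^[2] u = f (f u) := by
            rw [show (2:ℕ) = 1 + 1 from rfl, Function.iterate_add_apply,
              Function.iterate_one]
          rw [this]; exact h4
        exact hG₁c h4' (hBG₁ h5) (refl_mem_uniformity hG₁)
    refine ⟨1, le_refl 1, fun i => if i = 0 then x' else x, by simp, by simp, ?_⟩
    intro i hi
    have hi0 : i = 0 := by omega
    subst hi0
    simpa using hshort

end Aux

theorem shadowing_restrict_nonwandering [UniformSpace X] [CompactSpace X]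
    (f : X → X) (hf : UniformContinuous f) (hsh : Shadowing f) :
    ∀ E ∈ uniformity X, ∃ D ∈ uniformity X,
      ∀ x : ℕ → X, (∀ i, NonWandering f (x i)) →
        (∀ i, (f (x i), x (i + 1)) ∈ D) →
          ∃ y : X, NonWandering f y ∧ ∀ n : ℕ, (f^[n] y, x n) ∈ E := by
  intro E hE
  obtain ⟨Ec, ⟨hEc, hEcc⟩, hEcE⟩ := uniformity_hasBasis_closed.mem_iff.mp hE
  obtain ⟨G, hGmem, hGshad⟩ := hsh Ec hEc
  obtain ⟨D, hDmem, hDG, hDback⟩ := backchain hf hGmem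
  refine ⟨D, hDmem, ?_⟩
  intro x hxO hxD
  have clus : ∀ (u : ℕ → X) (y : X) (C : Set X), MapClusterPt y atTop u → IsClosed C →
      (∀ᶠ j in atTop, u j ∈ C) → y ∈ C := by
    intro u y C hy hC hev
    have h2 : Filter.map u atTop ≤ 𝓟 C := le_principal_iff.mpr (mem_map.mpr hev)
    have hy2 : ClusterPt y (Filter.map u atTop) := hy
    exact hC.closure_subset (mem_closure_iff_clusterPt.mpr (hy2.mono h2))
  have hCn : ∀ n : ℕ, IsClosed (f^[n] ⁻¹' {w : X | (w, x n) ∈ Ec}) := by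
    intro n
    exact (hEcc.preimage (continuous_id.prodMk continuous_const)).preimage
      ((hf.continuous).iterate n)
  have key : ∀ k : ℕ, ∃ y, NonWandering f y ∧ ∀ n ≤ k, (f^[n] y, x n) ∈ Ec := by
    intro k
    have back : ∀ j : ℕ, ∃ (Bn : ℕ) (Bc : ℕ → X), Bc 0 = x j ∧ Bc Bn = x 0 ∧
        ∀ i < Bn, (f (Bc i), Bc (i + 1)) ∈ G := by
      intro j
      induction j with
      | zero => exact ⟨0, fun _ => x 0, rfl, rfl, fun i hi => absurd hi (by omega)⟩
      | succ j ih =>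
        obtain ⟨Bn, Bc, hB0, hBn, hBj⟩ := ih
        obtain ⟨m, hm1, c, hc0, hcm, hcj⟩ := hDback (x j) (x (j + 1)) (hxO j) (hxD j)
        refine ⟨m + Bn, fun i => if i < m then c i else Bc (i - m), ?_, ?_, ?_⟩
        · simp only []
          rw [if_pos (show (0:ℕ) < m from hm1)]; exact hc0
        · simp only []
          rw [if_neg (show ¬ (m + Bn < m) by omega),
            show m + Bn - m = Bn by omega]; exact hBn
        · intro i hi
          by_cases h1 : i + 1 < m
          · have h0 : i < m := by omega
            simp only [if_pos h0, if_pos h1]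
            exact hcj i (by omega)
          · by_cases h2 : i < m
            · have h3 : i + 1 = m := by omega
              simp only [if_pos h2, if_neg h1]
              rw [show i + 1 - m = 0 by omega, hB0, ← hcm, ← h3]
              exact hcj i (by omega)
            · simp only [if_neg h2, if_neg h1]
              rw [show i + 1 - m = (i - m) + 1 by omega]
              exact hBj (i - m) (by omega)
    obtain ⟨Bn, Bc, hB0, hBn, hBj⟩ := back (k + 1)
    set T : ℕ := (k + 1) + Bn with hT
    have hT1 : 1 ≤ T := by omega
    set L : ℕ → X := fun i => if i < k + 1 then x i else Bc (i - (k + 1)) with hL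
    have hL0 : L 0 = x 0 := by simp [hL]
    have hLT : L T = x 0 := by
      rw [hL]
      simp only []
      rw [if_neg (show ¬ (T < k + 1) by omega), show T - (k + 1) = Bn by omega]
      exact hBn
    have hLx : ∀ n ≤ k, L n = x n := by
      intro n hn
      rw [hL]; simp only []
      rw [if_pos (show n < k + 1 by omega)]
    have hLjump : ∀ i < T, (f (L i), L (i + 1)) ∈ G := by
      intro i hi
      by_cases h1 : i + 1 < k + 1
      · rw [hL]; simp only []
        rw [if_pos (show i < k + 1 by omega), if_pos h1]
        exact hDG (hxD i)
      · by_cases h2 : i < k + 1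
        · have h3 : i = k := by omega
          rw [hL]; simp only []
          rw [if_pos h2, if_neg h1, show i + 1 - (k + 1) = 0 by omega, hB0, h3]
          exact hDG (hxD k)
        · rw [hL]; simp only []
          rw [if_neg h2, if_neg h1, show i + 1 - (k + 1) = (i - (k + 1)) + 1 by omega]
          exact hBj _ (by omega)
    set Z : ℕ → X := fun n => L (n % T) with hZ
    have hZmul : ∀ n j, Z (n + j * T) = Z n := by
      intro n j
      rw [hZ]; simp only []
      rw [Nat.add_mul_mod_self_right]
    have hZx : ∀ n ≤ k, Z n = x n := by
      intro n hn
      rw [hZ]; simp only []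
      rw [Nat.mod_eq_of_lt (by omega)]
      exact hLx n hn
    have hZjump : ∀ i, (f (Z i), Z (i + 1)) ∈ G := by
      intro i
      have hr : i % T < T := Nat.mod_lt _ (by omega)
      have hmod : (i + 1) % T = (i % T + 1) % T := by
        conv_lhs => rw [← Nat.div_add_mod i T]
        rw [Nat.add_assoc, Nat.mul_add_mod]
      by_cases hcase : i % T + 1 < T
      · have he : (i + 1) % T = i % T + 1 := by rw [hmod, Nat.mod_eq_of_lt hcase]
        show (f (L (i % T)), L ((i + 1) % T)) ∈ G
        rw [he]
        exact hLjump _ hr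
      · have heq : i % T + 1 = T := by omega
        have he : (i + 1) % T = 0 := by rw [hmod, heq, Nat.mod_self]
        show (f (L (i % T)), L ((i + 1) % T)) ∈ G
        have hj := hLjump (i % T) hr
        rw [heq, hLT] at hj
        rw [he, hL0]
        exact hj
    obtain ⟨z, hz⟩ := hGshad Z hZjump
    set u : ℕ → X := fun j => f^[j * T] z with hu
    obtain ⟨y, hy⟩ := exists_clusterPt_of_compactSpace (Filter.map u atTop)
    have hy' : MapClusterPt y atTop u := hy
    refine ⟨y, ?_, ?_⟩
    · intro V hV
      have hfreq : ∃ᶠ j in atTop, u j ∈ V := mapClusterPt_iff_frequently.mp hy' V hV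
      obtain ⟨j₁, _, hj₁⟩ := frequently_atTop.mp hfreq 0
      obtain ⟨j₂, hj₂ge, hj₂⟩ := frequently_atTop.mp hfreq (j₁ + 1)
      have hpos : 1 ≤ (j₂ - j₁) * T := by
        have := Nat.mul_pos (show 0 < j₂ - j₁ by omega) (show 0 < T by omega)
        omega
      refine ⟨(j₂ - j₁) * T, hpos, u j₁, hj₁, ?_⟩
      show f^[(j₂ - j₁) * T] (f^[j₁ * T] z) ∈ V
      rw [← Function.iterate_add_apply]
      have harith : (j₂ - j₁) * T + j₁ * T = j₂ * T := by
        rw [← Nat.add_mul]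
        congr 1
        omega
      rw [harith]
      exact hj₂
    · intro n hn
      have hmem : ∀ j, u j ∈ f^[n] ⁻¹' {w : X | (w, x n) ∈ Ec} := by
        intro j
        show (f^[n] (f^[j * T] z), x n) ∈ Ec
        rw [← Function.iterate_add_apply]
        have h := hz (n + j * T)
        rw [hZmul n j, hZx n hn] at h
        exact h
      exact clus u y _ hy' (hCn n) (Filter.Eventually.of_forall hmem)
  choose ys hysO hys using key
  obtain ⟨y, hy⟩ := exists_clusterPt_of_compactSpace (Filter.map ys atTop)
  have hy' : MapClusterPt y atTop ys := hy
  refine ⟨y, ?_, ?_⟩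
  · intro V hV
    have hIo : IsOpen (interior V) := isOpen_interior
    have hyi : interior V ∈ nhds y := hIo.mem_nhds (mem_interior_iff_mem_nhds.mpr hV)
    have hfreq : ∃ᶠ k in atTop, ys k ∈ interior V := mapClusterPt_iff_frequently.mp hy' _ hyi
    obtain ⟨k, _, hk⟩ := frequently_atTop.mp hfreq 0
    obtain ⟨n, hn1, w, hw1, hw2⟩ := hysO k (interior V) (hIo.mem_nhds hk)
    exact ⟨n, hn1, w, interior_subset hw1, Set.preimage_mono interior_subset hw2⟩
  · intro n
    have hev : ∀ᶠ k in atTop, ys k ∈ f^[n] ⁻¹' {w : X | (w, x n) ∈ Ec} :=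
      Filter.eventually_atTop.mpr ⟨n, fun k hk => hys k n hk⟩
    exact hEcE (clus ys y _ hy' (hCn n) hev)
end
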